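/- Let X be a Hermitian d×d matrix with Tr(X⁻) ≤ δ and P an orthogonal projection with Tr(PX) ≥ ‖X‖_{S1} − δ, and ‖X‖_{S1} ≤ 1, for 0 ≤ δ ≤ 1. Then ‖(Id − P)X⁺‖_{S1}² ≤ δ, where X⁺ is the positive part of X. -/

import Mathlib

open Matrix ComplexOrder

/-- The Frobenius norm of a complex square matrix: `(Tr(AᴴA))^{1/2}`. -/
noncomputable def frobNorm {d : ℕ} (A : Matrix (Fin d) (Fin d) ℂ) : ℝ :=
  Real.sqrt ((Aᴴ * A).trace.re)

/-- The Schatten-1 (nuclear) norm: the sum of singular values, i.e. `Tr((AᴴA)^{1/2})`. -/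
noncomputable def nucNorm {d : ℕ} (A : Matrix (Fin d) (Fin d) ℂ) : ℝ :=
  (((Matrix.posSemidef_conjTranspose_mul_self A).1.eigenvectorUnitary : Matrix (Fin d) (Fin d) ℂ) *
    Matrix.diagonal ((fun x : ℝ => (x : ℂ)) ∘ (Real.sqrt ∘ (Matrix.posSemidef_conjTranspose_mul_self A).1.eigenvalues)) *
    (star (Matrix.posSemidef_conjTranspose_mul_self A).1.eigenvectorUnitary :
      Matrix (Fin d) (Fin d) ℂ)).trace.re


/-- The positive part `X⁺` of a Hermitian matrix, via the spectral decomposition. -/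
noncomputable def posPart {d : ℕ} {X : Matrix (Fin d) (Fin d) ℂ} (hX : X.IsHermitian) :
    Matrix (Fin d) (Fin d) ℂ :=
  (hX.eigenvectorUnitary : Matrix (Fin d) (Fin d) ℂ) *
    Matrix.diagonal (fun i => ((max (hX.eigenvalues i) 0 : ℝ) : ℂ)) *
    (hX.eigenvectorUnitary : Matrix (Fin d) (Fin d) ℂ)ᴴ

/-- The negative part `X⁻` of a Hermitian matrix, via the spectral decomposition,
so that `X = X⁺ - X⁻`. -/
noncomputable def negPart {d : ℕ} {X : Matrix (Fin d) (Fin d) ℂ} (hX : X.IsHermitian) :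
    Matrix (Fin d) (Fin d) ℂ :=
  (hX.eigenvectorUnitary : Matrix (Fin d) (Fin d) ℂ) *
    Matrix.diagonal (fun i => ((max (-hX.eigenvalues i) 0 : ℝ) : ℂ)) *
    (hX.eigenvectorUnitary : Matrix (Fin d) (Fin d) ℂ)ᴴ

open scoped MatrixOrder

variable {d : ℕ}

lemma psd_sqrt_eq {M : Matrix (Fin d) (Fin d) ℂ} (hM : M.PosSemidef) :
    CFC.sqrt M = (hM.1.eigenvectorUnitary : Matrix (Fin d) (Fin d) ℂ) *
      Matrix.diagonal ((fun x : ℝ => (x : ℂ)) ∘ (Real.sqrt ∘ hM.1.eigenvalues)) *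
      (star hM.1.eigenvectorUnitary : Matrix (Fin d) (Fin d) ℂ) := by
  rw [CFC.sqrt_eq_cfc, cfc_nnreal_eq_real _ M hM.nonneg, hM.1.cfc_eq, IsHermitian.cfc,
    Unitary.conjStarAlgAut_apply]
  congr 3
  funext i
  simp [hM.eigenvalues_nonneg i]

lemma psd_of_proj {P : Matrix (Fin d) (Fin d) ℂ} (hPh : Pᴴ = P) (hPi : P * P = P) :
    P.PosSemidef := by
  have : P = Pᴴ * P := by rw [hPh, hPi]
  rw [this]; exact posSemidef_conjTranspose_mul_self P

lemma trace_re_nonneg {N : Matrix (Fin d) (Fin d) ℂ} (hN : N.PosSemidef) : 0 ≤ N.trace.re := by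
  rw [Matrix.trace, Complex.re_sum]
  refine Finset.sum_nonneg fun i _ => ?_
  have := hN.re_dotProduct_nonneg (Pi.single i 1)
  simpa [dotProduct, Matrix.mulVec_single, Pi.single_apply, Matrix.diag] using this

lemma trace_mul_re_nonneg {A B : Matrix (Fin d) (Fin d) ℂ} (hA : A.PosSemidef)
    (hB : B.PosSemidef) : 0 ≤ (A * B).trace.re := by
  have key : ∀ S : Matrix (Fin d) (Fin d) ℂ, Sᴴ = S → 0 ≤ (S * S * B).trace.re := by
    intro S hSh
    have h1 : (S * S * B).trace = (Sᴴ * B * S).trace := by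
      rw [hSh, mul_assoc, trace_mul_comm]
    rw [h1]
    exact trace_re_nonneg (hB.conjTranspose_mul_mul_same _)
  have := key (CFC.sqrt A) (CFC.sqrt_nonneg A).posSemidef.1
  rwa [CFC.sqrt_mul_sqrt_self A hA.nonneg] at this

lemma star_mul_self_re (z : ℂ) : (star z * z).re = ‖z‖ ^ 2 := by
  rw [Complex.star_def, mul_comm, Complex.mul_conj, Complex.ofReal_re,
    Complex.normSq_eq_norm_sq]

lemma entry_self_re (Y : Matrix (Fin d) (Fin d) ℂ) (i : Fin d) :
    ((Yᴴ * Y) i i).re = ∑ j, ‖Y j i‖ ^ 2 := by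
  rw [Matrix.mul_apply, Complex.re_sum]
  exact Finset.sum_congr rfl fun j _ => by
    rw [Matrix.conjTranspose_apply, star_mul_self_re]

lemma entry_self_re_nonneg (Y : Matrix (Fin d) (Fin d) ℂ) (i : Fin d) :
    0 ≤ ((Yᴴ * Y) i i).re := by
  rw [entry_self_re]; positivity

lemma entry_cs (Y Z : Matrix (Fin d) (Fin d) ℂ) (i : Fin d) :
    ((Yᴴ * Z) i i).re ≤ Real.sqrt ((Yᴴ * Y) i i).re * Real.sqrt ((Zᴴ * Z) i i).re := by
  rw [entry_self_re, entry_self_re, Matrix.mul_apply, Complex.re_sum]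
  calc ∑ j, (Yᴴ i j * Z j i).re
      ≤ ∑ j, ‖Y j i‖ * ‖Z j i‖ := by
        refine Finset.sum_le_sum fun j _ => ?_
        calc (Yᴴ i j * Z j i).re ≤ ‖Yᴴ i j * Z j i‖ := Complex.re_le_norm _
          _ = ‖Y j i‖ * ‖Z j i‖ := by
              rw [norm_mul, Matrix.conjTranspose_apply, norm_star]
    _ ≤ Real.sqrt (∑ j, ‖Y j i‖ ^ 2) * Real.sqrt (∑ j, ‖Z j i‖ ^ 2) :=
        Real.sum_mul_le_sqrt_mul_sqrt _ _ _

lemma trace_conj (V D : Matrix (Fin d) (Fin d) ℂ) (hV : Vᴴ * V = 1) :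
    (V * D * Vᴴ).trace = D.trace := by
  rw [trace_mul_cycle, hV, one_mul]

lemma inv_sqrt_mul {x : ℝ} (hx : 0 ≤ x) : (Real.sqrt x)⁻¹ * x = Real.sqrt x := by
  rcases eq_or_lt_of_le hx with h | h
  · simp [← h]
  · have hs : 0 < Real.sqrt x := Real.sqrt_pos.mpr h
    rw [inv_mul_eq_div, div_eq_iff hs.ne', Real.mul_self_sqrt hx]


lemma inv_sqrt_mul_e {x : ℝ} (hx : 0 ≤ x) :
    (Real.sqrt x)⁻¹ * ((Real.sqrt x)⁻¹ * x * (Real.sqrt x)⁻¹) = (Real.sqrt x)⁻¹ := by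
  rcases eq_or_lt_of_le hx with h | h
  · simp [← h]
  · have hs : 0 < Real.sqrt x := Real.sqrt_pos.mpr h
    rw [inv_sqrt_mul hx, mul_inv_cancel₀ hs.ne', mul_one]

lemma sqrt_trace_bound {M B Q : Matrix (Fin d) (Fin d) ℂ} (hM : M.PosSemidef)
    (hB : B.PosSemidef) (hQh : Qᴴ = Q) (hQi : Q * Q = Q) (hMeq : M = B * Q * B) :
    (CFC.sqrt M).trace.re ≤ Real.sqrt ((Q * B).trace.re) * Real.sqrt (B.trace.re) := by
  have hB1 : Bᴴ = B := hB.1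
  set μ : Fin d → ℝ := hM.1.eigenvalues with hmu
  have hμ0 : ∀ i, 0 ≤ μ i := fun i => hM.eigenvalues_nonneg i
  set V : Matrix (Fin d) (Fin d) ℂ := (hM.1.eigenvectorUnitary : Matrix (Fin d) (Fin d) ℂ)
    with hVdef
  have hV1 : Vᴴ * V = 1 := by
    simpa [star_eq_conjTranspose] using mem_unitaryGroup_iff'.mp hM.1.eigenvectorUnitary.2
  have hV2 : V * Vᴴ = 1 := by
    simpa [star_eq_conjTranspose] using mem_unitaryGroup_iff.mp hM.1.eigenvectorUnitary.2
  have hspec : M = V * Matrix.diagonal (fun i => ((μ i : ℝ) : ℂ)) * Vᴴ := by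
    simpa [star_eq_conjTranspose, Function.comp_def] using hM.1.spectral_theorem
  have hdiag : Vᴴ * (B * Q * B) * V = Matrix.diagonal (fun i => ((μ i : ℝ) : ℂ)) := by
    rw [← hMeq, hspec]
    simp only [Matrix.mul_assoc]
    rw [hV1, mul_one, ← Matrix.mul_assoc, hV1, one_mul]
  have hdiag1 : Vᴴ * (B * (Q * (B * V))) = Matrix.diagonal (fun i => ((μ i : ℝ) : ℂ)) := by
    calc Vᴴ * (B * (Q * (B * V))) = Vᴴ * (B * Q * B) * V := by simp only [Matrix.mul_assoc]
      _ = _ := hdiag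
  have hdiagx : ∀ x : Matrix (Fin d) (Fin d) ℂ,
      Vᴴ * (B * (Q * (B * (V * x)))) = Matrix.diagonal (fun i => ((μ i : ℝ) : ℂ)) * x := by
    intro x
    calc Vᴴ * (B * (Q * (B * (V * x)))) = (Vᴴ * (B * (Q * (B * V)))) * x := by
          simp only [Matrix.mul_assoc]
      _ = _ := by rw [hdiag1]
  set Dp : Matrix (Fin d) (Fin d) ℂ :=
    Matrix.diagonal (fun i => (((Real.sqrt (μ i))⁻¹ : ℝ) : ℂ)) with hDp
  set U : Matrix (Fin d) (Fin d) ℂ := Q * B * V * Dp with hU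
  have hDph : Dpᴴ = Dp := by
    have hst : star (fun i => (((Real.sqrt (μ i))⁻¹ : ℝ) : ℂ))
        = fun i => (((Real.sqrt (μ i))⁻¹ : ℝ) : ℂ) := funext fun i => by
      simp [Pi.star_def, Complex.star_def, Complex.conj_ofReal]
    rw [hDp, diagonal_conjTranspose, hst]
  have hUdag : Uᴴ = Dp * (Vᴴ * (B * Q)) := by
    rw [hU]
    simp only [conjTranspose_mul, hDph, hQh, hB1, Matrix.mul_assoc]
  have hQQ : ∀ x : Matrix (Fin d) (Fin d) ℂ, Q * (Q * x) = Q * x := fun x => by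
    rw [← Matrix.mul_assoc, hQi]
  -- (i) Uᴴ B V is diagonal of sqrt eigenvalues
  have hUBV : Uᴴ * (B * V) = Matrix.diagonal (fun i => ((Real.sqrt (μ i) : ℝ) : ℂ)) := by
    rw [hUdag]
    calc Dp * (Vᴴ * (B * Q)) * (B * V) = Dp * (Vᴴ * (B * (Q * (B * V)))) := by
          simp only [Matrix.mul_assoc]
      _ = Dp * Matrix.diagonal (fun i => ((μ i : ℝ) : ℂ)) := by rw [hdiag1]
      _ = _ := by
          rw [hDp, diagonal_mul_diagonal]
          have hfun : (fun i => (((Real.sqrt (μ i))⁻¹ : ℝ) : ℂ) * ((μ i : ℝ) : ℂ))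
              = fun i => ((Real.sqrt (μ i) : ℝ) : ℂ) := funext fun i => by
            rw [← Complex.ofReal_mul, inv_sqrt_mul (hμ0 i)]
          rw [hfun]
  -- (ii) Uᴴ U is a 0/1 diagonal e
  set e : Fin d → ℝ := fun i => (Real.sqrt (μ i))⁻¹ * μ i * (Real.sqrt (μ i))⁻¹ with he
  have hUU : Uᴴ * U = Matrix.diagonal (fun i => ((e i : ℝ) : ℂ)) := by
    rw [hUdag, hU]
    calc Dp * (Vᴴ * (B * Q)) * (Q * B * V * Dp)
        = Dp * (Vᴴ * (B * (Q * (Q * (B * (V * Dp)))))) := by simp only [Matrix.mul_assoc]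
      _ = Dp * (Vᴴ * (B * (Q * (B * (V * Dp))))) := by rw [hQQ]
      _ = Dp * (Matrix.diagonal (fun i => ((μ i : ℝ) : ℂ)) * Dp) := by rw [hdiagx]
      _ = _ := by
          rw [← Matrix.mul_assoc, hDp, diagonal_mul_diagonal, diagonal_mul_diagonal]
          have hfun : (fun i => (((Real.sqrt (μ i))⁻¹ : ℝ) : ℂ) * ((μ i : ℝ) : ℂ)
                * (((Real.sqrt (μ i))⁻¹ : ℝ) : ℂ))
              = fun i => ((e i : ℝ) : ℂ) := funext fun i => by
            rw [he]; push_cast; ring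
          rw [hfun]
  have hQU : Q * U = U := by
    rw [hU]
    calc Q * (Q * B * V * Dp) = Q * (Q * (B * (V * Dp))) := by simp only [Matrix.mul_assoc]
      _ = Q * (B * (V * Dp)) := by rw [hQQ]
      _ = Q * B * V * Dp := by simp only [Matrix.mul_assoc]
  have hUQ : Uᴴ * Q = Uᴴ := by
    conv_lhs => rw [← hQh, ← conjTranspose_mul, hQU]
  have hUE : U * Matrix.diagonal (fun i => ((e i : ℝ) : ℂ)) = U := by
    rw [hU]
    calc Q * B * V * Dp * Matrix.diagonal (fun i => ((e i : ℝ) : ℂ))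
        = Q * (B * (V * (Dp * Matrix.diagonal (fun i => ((e i : ℝ) : ℂ))))) := by
          simp only [Matrix.mul_assoc]
      _ = Q * (B * (V * Dp)) := by
          rw [hDp, diagonal_mul_diagonal]
          have hfun : (fun i => (((Real.sqrt (μ i))⁻¹ : ℝ) : ℂ) * ((e i : ℝ) : ℂ))
              = fun i => (((Real.sqrt (μ i))⁻¹ : ℝ) : ℂ) := funext fun i => by
            rw [he, ← Complex.ofReal_mul, inv_sqrt_mul_e (hμ0 i)]
          rw [hfun]
      _ = Q * B * V * Dp := by simp only [Matrix.mul_assoc]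
  have hRR : (U * Uᴴ) * (U * Uᴴ) = U * Uᴴ := by
    calc (U * Uᴴ) * (U * Uᴴ) = (U * (Uᴴ * U)) * Uᴴ := by simp only [Matrix.mul_assoc]
      _ = (U * Matrix.diagonal (fun i => ((e i : ℝ) : ℂ))) * Uᴴ := by rw [hUU]
      _ = U * Uᴴ := by rw [hUE]
  have hRh : (U * Uᴴ)ᴴ = U * Uᴴ := by simp [conjTranspose_mul]
  have h1R : ((1 : Matrix (Fin d) (Fin d) ℂ) - U * Uᴴ).PosSemidef := by
    refine psd_of_proj ?_ ?_
    · rw [conjTranspose_sub, conjTranspose_one, hRh]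
    · rw [sub_mul, one_mul, mul_sub, mul_one, hRR, sub_self, sub_zero]
  -- the analysis part
  set S : Matrix (Fin d) (Fin d) ℂ := CFC.sqrt B with hSdef
  have hSh : Sᴴ = S := (CFC.sqrt_nonneg B).posSemidef.1
  have hSS : S * S = B := CFC.sqrt_mul_sqrt_self B hB.nonneg
  set Y : Matrix (Fin d) (Fin d) ℂ := S * U with hY
  set Z : Matrix (Fin d) (Fin d) ℂ := S * V with hZ
  have hYZ : Yᴴ * Z = Matrix.diagonal (fun i => ((Real.sqrt (μ i) : ℝ) : ℂ)) := by
    calc Yᴴ * Z = Uᴴ * (Sᴴ * (S * V)) := by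
          rw [hY, hZ, conjTranspose_mul]; simp only [Matrix.mul_assoc]
      _ = Uᴴ * (B * V) := by rw [hSh, ← Matrix.mul_assoc S, hSS]
      _ = _ := hUBV
  have hYYeq : Yᴴ * Y = Uᴴ * (B * U) := by
    calc Yᴴ * Y = Uᴴ * (Sᴴ * (S * U)) := by
          rw [hY, conjTranspose_mul]; simp only [Matrix.mul_assoc]
      _ = Uᴴ * (B * U) := by rw [hSh, ← Matrix.mul_assoc S, hSS]
  have hZZeq : Zᴴ * Z = Vᴴ * (B * V) := by
    calc Zᴴ * Z = Vᴴ * (Sᴴ * (S * V)) := by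
          rw [hZ, conjTranspose_mul]; simp only [Matrix.mul_assoc]
      _ = Vᴴ * (B * V) := by rw [hSh, ← Matrix.mul_assoc S, hSS]
  have hZZtr : (Zᴴ * Z).trace = B.trace := by
    rw [hZZeq, ← Matrix.mul_assoc, trace_mul_cycle, hV2, one_mul]
  have hR2 : Q * ((U * Uᴴ) * Q) = U * Uᴴ := by
    rw [Matrix.mul_assoc U, hUQ, ← Matrix.mul_assoc, hQU]
  have hYYtr : (Yᴴ * Y).trace = ((Q * (B * Q)) * (U * Uᴴ)).trace := by
    calc (Yᴴ * Y).trace = (Uᴴ * (B * U)).trace := by rw [hYYeq]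
      _ = ((B * U) * Uᴴ).trace := trace_mul_comm _ _
      _ = (B * (Q * ((U * Uᴴ) * Q))).trace := by rw [hR2, Matrix.mul_assoc]
      _ = (((B * Q) * (U * Uᴴ)) * Q).trace := by simp only [Matrix.mul_assoc]
      _ = ((Q * (B * Q)) * (U * Uᴴ)).trace := by
          rw [trace_mul_comm, ← Matrix.mul_assoc, ← Matrix.mul_assoc]
  have hC_psd : (Q * (B * Q)).PosSemidef := by
    have := hB.conjTranspose_mul_mul_same Q
    rw [hQh] at this
    rwa [Matrix.mul_assoc] at this
  have hCtr : (Q * (B * Q)).trace = (Q * B).trace := by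
    rw [← Matrix.mul_assoc, trace_mul_cycle, hQi]
  have bound1 : (Yᴴ * Y).trace.re ≤ (Q * B).trace.re := by
    have hps := trace_mul_re_nonneg hC_psd h1R
    have hexp : (Q * (B * Q)) * (1 - U * Uᴴ)
        = (Q * (B * Q)) - (Q * (B * Q)) * (U * Uᴴ) := by rw [mul_sub, mul_one]
    rw [hexp, trace_sub, Complex.sub_re] at hps
    rw [hYYtr]
    rw [hCtr] at hps
    linarith
  -- trace of the sqrt
  have lhs_eq : (CFC.sqrt M).trace.re = ∑ i, Real.sqrt (μ i) := by
    rw [show CFC.sqrt M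
        = V * Matrix.diagonal (fun i => ((Real.sqrt (μ i) : ℝ) : ℂ)) * Vᴴ from
          (psd_sqrt_eq hM).trans rfl]
    rw [trace_conj _ _ hV1, trace_diagonal, Complex.re_sum]
    simp [Complex.ofReal_re]
  have sum_nonneg' : 0 ≤ ∑ i, Real.sqrt (μ i) :=
    Finset.sum_nonneg fun i _ => Real.sqrt_nonneg _
  have trace_diag_re : ∀ W : Matrix (Fin d) (Fin d) ℂ, W.trace.re = ∑ i, (W i i).re := by
    intro W
    rw [Matrix.trace, Complex.re_sum]
    rfl
  have step : ∑ i, Real.sqrt (μ i) ≤ Real.sqrt ((Q * B).trace.re) * Real.sqrt (B.trace.re) := by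
    calc ∑ i, Real.sqrt (μ i) = ∑ i, ((Yᴴ * Z) i i).re := by
          rw [hYZ]
          refine Finset.sum_congr rfl fun i _ => ?_
          rw [Matrix.diagonal_apply_eq, Complex.ofReal_re]
      _ ≤ ∑ i, Real.sqrt ((Yᴴ * Y) i i).re * Real.sqrt ((Zᴴ * Z) i i).re :=
          Finset.sum_le_sum fun i _ => entry_cs Y Z i
      _ ≤ Real.sqrt (∑ i, ((Yᴴ * Y) i i).re) * Real.sqrt (∑ i, ((Zᴴ * Z) i i).re) :=
          Real.sum_sqrt_mul_sqrt_le _ (fun i => entry_self_re_nonneg Y i)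
            (fun i => entry_self_re_nonneg Z i)
      _ = Real.sqrt ((Yᴴ * Y).trace.re) * Real.sqrt ((Zᴴ * Z).trace.re) := by
          rw [trace_diag_re (Yᴴ * Y), trace_diag_re (Zᴴ * Z)]
      _ ≤ Real.sqrt ((Q * B).trace.re) * Real.sqrt (B.trace.re) := by
          have h1 := Real.sqrt_le_sqrt bound1
          have h2 : Real.sqrt ((Zᴴ * Z).trace.re) = Real.sqrt (B.trace.re) := by rw [hZZtr]
          rw [h2]
          exact mul_le_mul_of_nonneg_right h1 (Real.sqrt_nonneg _)
  rw [lhs_eq]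
  exact step

lemma sqrt_trace_nonneg {M : Matrix (Fin d) (Fin d) ℂ} (hM : M.PosSemidef) :
    0 ≤ (CFC.sqrt M).trace.re := trace_re_nonneg (CFC.sqrt_nonneg M).posSemidef

lemma nucNorm_mul_sq_le (B Q : Matrix (Fin d) (Fin d) ℂ) (hB : B.PosSemidef)
    (hQh : Qᴴ = Q) (hQi : Q * Q = Q) :
    nucNorm (Q * B) ^ 2 ≤ (Q * B).trace.re * B.trace.re := by
  have hB1 : Bᴴ = B := hB.1
  have hM : ((Q * B)ᴴ * (Q * B)).PosSemidef := posSemidef_conjTranspose_mul_self (Q * B)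
  have hMeq : (Q * B)ᴴ * (Q * B) = B * Q * B := by
    rw [conjTranspose_mul, hQh, hB1, mul_assoc, ← mul_assoc Q Q B, hQi, ← mul_assoc]
  have key := sqrt_trace_bound hM hB hQh hQi hMeq
  have hnn := sqrt_trace_nonneg hM
  have h0 : 0 ≤ (Q * B).trace.re := trace_mul_re_nonneg (psd_of_proj hQh hQi) hB
  have hb0 : 0 ≤ B.trace.re := trace_re_nonneg hB
  have : nucNorm (Q * B) = (CFC.sqrt ((Q * B)ᴴ * (Q * B))).trace.re := by
    rw [psd_sqrt_eq hM]; rfl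
  rw [this]
  calc (CFC.sqrt ((Q * B)ᴴ * (Q * B))).trace.re ^ 2
      ≤ (Real.sqrt ((Q * B).trace.re) * Real.sqrt (B.trace.re)) ^ 2 :=
        pow_le_pow_left₀ hnn key 2
    _ = (Q * B).trace.re * B.trace.re := by
        rw [mul_pow, Real.sq_sqrt h0, Real.sq_sqrt hb0]

lemma max_sub_max_neg (a : ℝ) : max a 0 - max (-a) 0 = a := by
  rcases le_total 0 a with h | h
  · rw [max_eq_left h, max_eq_right (neg_nonpos.mpr h), sub_zero]
  · rw [max_eq_right h, max_eq_left (neg_nonneg.mpr h), zero_sub, neg_neg]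

lemma max_add_max_neg (a : ℝ) : max a 0 + max (-a) 0 = |a| := by
  rcases le_total 0 a with h | h
  · rw [max_eq_left h, max_eq_right (neg_nonpos.mpr h), add_zero, abs_of_nonneg h]
  · rw [max_eq_right h, max_eq_left (neg_nonneg.mpr h), zero_add, abs_of_nonpos h]


/-- If Hermitian `X` satisfies `Tr(X⁻) ≤ δ`, `‖X‖₁ ≤ 1`, and `P` is an orthogonal
projection with `Tr(PX) ≥ ‖X‖₁ - δ`, for some `0 ≤ δ ≤ 1`, then
`‖(Id - P)X⁺‖₁² ≤ δ`. -/
theorem nucNorm_compl_posPart_sq_le {d : ℕ} (X P : Matrix (Fin d) (Fin d) ℂ)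
    (hX : X.IsHermitian) (δ : ℝ) (hδ0 : 0 ≤ δ) (hδ1 : δ ≤ 1)
    (hPh : Pᴴ = P) (hPi : P * P = P)
    (hX1 : nucNorm X ≤ 1)
    (hXneg : (negPart hX).trace.re ≤ δ)
    (hPX : nucNorm X - δ ≤ (P * X).trace.re) :
    (nucNorm (((1 : Matrix (Fin d) (Fin d) ℂ) - P) * posPart hX)) ^ 2 ≤ δ := by
  set Q : Matrix (Fin d) (Fin d) ℂ := 1 - P with hQdef
  have hQh : Qᴴ = Q := by rw [hQdef, conjTranspose_sub, conjTranspose_one, hPh]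
  have hQi : Q * Q = Q := by
    rw [hQdef, sub_mul, one_mul, mul_sub, mul_one, hPi, sub_self, sub_zero]
  set W : Matrix (Fin d) (Fin d) ℂ := (hX.eigenvectorUnitary : Matrix (Fin d) (Fin d) ℂ)
    with hWdef
  set lam : Fin d → ℝ := hX.eigenvalues with hlam
  have hW1 : Wᴴ * W = 1 := by
    simpa [star_eq_conjTranspose] using mem_unitaryGroup_iff'.mp hX.eigenvectorUnitary.2
  have hW2 : W * Wᴴ = 1 := by
    simpa [star_eq_conjTranspose] using mem_unitaryGroup_iff.mp hX.eigenvectorUnitary.2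
  have hXspec : X = W * Matrix.diagonal (fun i => ((lam i : ℝ) : ℂ)) * Wᴴ := by
    simpa [star_eq_conjTranspose, Function.comp_def] using hX.spectral_theorem
  have hAp : posPart hX
      = W * Matrix.diagonal (fun i => ((max (lam i) 0 : ℝ) : ℂ)) * Wᴴ := rfl
  have hAn : negPart hX
      = W * Matrix.diagonal (fun i => ((max (-lam i) 0 : ℝ) : ℂ)) * Wᴴ := rfl
  have hApP : (posPart hX).PosSemidef := by
    rw [hAp]
    exact (Matrix.PosSemidef.diagonal fun i =>
      Complex.zero_le_real.mpr (le_max_right _ _)).mul_mul_conjTranspose_same W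
  have hAnP : (negPart hX).PosSemidef := by
    rw [hAn]
    exact (Matrix.PosSemidef.diagonal fun i =>
      Complex.zero_le_real.mpr (le_max_right _ _)).mul_mul_conjTranspose_same W
  have trace_WD : ∀ f : Fin d → ℝ,
      (W * Matrix.diagonal (fun i => ((f i : ℝ) : ℂ)) * Wᴴ).trace.re = ∑ i, f i := by
    intro f
    rw [trace_conj _ _ hW1, trace_diagonal, Complex.re_sum]
    simp
  have hprod : ∀ D1 D2 : Matrix (Fin d) (Fin d) ℂ,
      (W * D1 * Wᴴ) * (W * D2 * Wᴴ) = W * (D1 * D2) * Wᴴ := by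
    intro D1 D2
    calc (W * D1 * Wᴴ) * (W * D2 * Wᴴ) = W * (D1 * ((Wᴴ * W) * (D2 * Wᴴ))) := by
          simp only [Matrix.mul_assoc]
      _ = W * (D1 * (D2 * Wᴴ)) := by rw [hW1, one_mul]
      _ = W * (D1 * D2) * Wᴴ := by simp only [Matrix.mul_assoc]
  have hsplit : posPart hX - negPart hX = X := by
    rw [hAp, hAn, ← sub_mul, ← mul_sub, Matrix.diagonal_sub]
    have hfun : (fun i => ((max (lam i) 0 : ℝ) : ℂ) - ((max (-lam i) 0 : ℝ) : ℂ))
        = fun i => ((lam i : ℝ) : ℂ) := funext fun i => by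
      rw [← Complex.ofReal_sub, max_sub_max_neg]
    rw [hfun, ← hXspec]
  -- nuclear norm of X
  have hnuc : nucNorm X = ∑ i, |lam i| := by
    have hRpsd : (W * Matrix.diagonal (fun i => ((|lam i| : ℝ) : ℂ)) * Wᴴ).PosSemidef :=
      (Matrix.PosSemidef.diagonal fun i =>
        Complex.zero_le_real.mpr (abs_nonneg _)).mul_mul_conjTranspose_same W
    have hXX : Xᴴ * X = X * X := by rw [hX.eq]
    have hRsq : (W * Matrix.diagonal (fun i => ((|lam i| : ℝ) : ℂ)) * Wᴴ) ^ 2 = Xᴴ * X := by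
      rw [pow_two, hprod, hXX]
      conv_rhs => rw [hXspec]
      rw [hprod, diagonal_mul_diagonal, diagonal_mul_diagonal]
      have hfun : (fun i => ((|lam i| : ℝ) : ℂ) * ((|lam i| : ℝ) : ℂ))
          = fun i => ((lam i : ℝ) : ℂ) * ((lam i : ℝ) : ℂ) := funext fun i => by
        rw [← Complex.ofReal_mul, ← Complex.ofReal_mul, abs_mul_abs_self]
      rw [hfun]
    have hReq : W * Matrix.diagonal (fun i => ((|lam i| : ℝ) : ℂ)) * Wᴴ
        = CFC.sqrt (Xᴴ * X) := by rw [← hRsq, CFC.sqrt_sq _ hRpsd.nonneg]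
    have : nucNorm X = (CFC.sqrt (Xᴴ * X)).trace.re := by
      rw [psd_sqrt_eq (posSemidef_conjTranspose_mul_self X)]; rfl
    rw [this, ← hReq, trace_WD]
  have hTrAp : (posPart hX).trace.re = ∑ i, max (lam i) 0 := by rw [hAp]; exact trace_WD _
  have hTrAn : (negPart hX).trace.re = ∑ i, max (-lam i) 0 := by rw [hAn]; exact trace_WD _
  have hTrAn0 : 0 ≤ (negPart hX).trace.re := by
    rw [hTrAn]
    exact Finset.sum_nonneg fun i _ => le_max_right _ _
  have hsum : (posPart hX).trace.re + (negPart hX).trace.re = nucNorm X := by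
    rw [hTrAp, hTrAn, hnuc, ← Finset.sum_add_distrib]
    exact Finset.sum_congr rfl fun i _ => max_add_max_neg _
  have hPpsd : P.PosSemidef := psd_of_proj hPh hPi
  have hQpsd : Q.PosSemidef := psd_of_proj hQh hQi
  have hApXAn : posPart hX = X + negPart hX := sub_eq_iff_eq_add.mp hsplit
  have hPAp : (P * posPart hX).trace = (P * X).trace + (P * negPart hX).trace := by
    rw [hApXAn, mul_add, trace_add]
  have hQAp : (Q * posPart hX).trace = (posPart hX).trace - (P * posPart hX).trace := by
    rw [hQdef, sub_mul, one_mul, trace_sub]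
  have hPAn0 : 0 ≤ (P * negPart hX).trace.re := trace_mul_re_nonneg hPpsd hAnP
  have key2 : (Q * posPart hX).trace.re ≤ δ := by
    rw [hQAp, Complex.sub_re, hPAp, Complex.add_re]
    linarith
  have key1 : (posPart hX).trace.re ≤ 1 := by linarith
  have key0 : 0 ≤ (posPart hX).trace.re := trace_re_nonneg hApP
  have key3 : 0 ≤ (Q * posPart hX).trace.re := trace_mul_re_nonneg hQpsd hApP
  calc nucNorm (Q * posPart hX) ^ 2
      ≤ (Q * posPart hX).trace.re * (posPart hX).trace.re :=
        nucNorm_mul_sq_le (posPart hX) Q hApP hQh hQi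
    _ ≤ δ * 1 := mul_le_mul key2 key1 key0 hδ0
    _ = δ := mul_one δ
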